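/- Let K be an abstract simplicial complex on [m], let i ∈ ω ⊆ [m] with {i} ∈ K. Then the full subcomplex of K(v_i) on the vertex set χ_i(ω) equals {ε ∪ χ_i(τ) : ε ⊆ {i}, τ ∈ K_{ω∖{i}}}, which is a cone with apex i; consequently its reduced simplicial homology vanishes in all degrees. -/

import Mathlib

set_option synthInstance.maxHeartbeats 1000000
set_option maxHeartbeats 1000000

structure ASC (m : ℕ) where
  faces : Set (Finset (Fin m))
  empty_mem : ∅ ∈ faces
  down_closed : ∀ {σ τ : Finset (Fin m)}, σ ∈ faces → τ ⊆ σ → τ ∈ faces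

def csg {m : ℕ} (i : Fin m) (σ : Finset (Fin m)) : ℤ :=
  (-1) ^ (σ.filter (fun j => j < i)).card

variable {m : ℕ}

/-- the relabeling `χ_i : [m] → [m+1]`. -/
def chi (i : Fin m) (j : Fin m) : Fin (m + 1) :=
  if (j : ℕ) ≤ (i : ℕ) then j.castSucc else j.succ

def chiF (i : Fin m) (σ : Finset (Fin m)) : Finset (Fin (m + 1)) := σ.image (chi i)

/-- the faces of the simplicial wedge `K(v_i)`. -/
def wedgeFaces (K : ASC m) (i : Fin m) : Set (Finset (Fin (m + 1))) :=
  {s | ∃ (α : Finset (Fin (m + 1))) (t : Finset (Fin m)), s = α ∪ chiF i t ∧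
      ((α ⊆ {i.castSucc} ∧ t ∈ K.faces ∧ i ∉ t) ∨
       (α ⊆ {i.succ} ∧ t ∈ K.faces ∧ i ∉ t) ∨
       (α ⊆ {i.castSucc, i.succ} ∧ t ∈ K.faces ∧ i ∉ t ∧ insert i t ∈ K.faces))}

/-- full subcomplex of a collection of faces on the vertex set `w`. -/
def fullSub {n : ℕ} (F : Set (Finset (Fin n))) (w : Finset (Fin n)) :
    Set (Finset (Fin n)) := {s | s ∈ F ∧ s ⊆ w}

/-- basis of the augmented simplicial chain complex of a collection of faces -/
def RIdx {n : ℕ} (F : Set (Finset (Fin n))) : Type := {σ : Finset (Fin n) // σ ∈ F}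

open Classical in
/-- the boundary of the augmented simplicial chain complex -/
noncomputable def Rbnd {n : ℕ} (F : Set (Finset (Fin n))) :
    (RIdx F →₀ ℤ) →ₗ[ℤ] (RIdx F →₀ ℤ) :=
  Finsupp.lift (RIdx F →₀ ℤ) ℤ (RIdx F) fun b =>
    ∑ i ∈ b.1,
      if h : b.1.erase i ∈ F then
        csg i b.1 • Finsupp.single (⟨b.1.erase i, h⟩ : RIdx F) (1 : ℤ)
      else 0

/-- degree of a simplex in the augmented chain complex is `card σ - 1`. -/
def Rdeg {n : ℕ} {F : Set (Finset (Fin n))} (b : RIdx F) : ℤ := (b.1.card : ℤ) - 1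

open Classical in
noncomputable def partSub {ι α : Type*} (f : ι → α) (a : α) : Submodule ℤ (ι →₀ ℤ) where
  carrier := {x | ∀ b ∈ x.support, f b = a}
  add_mem' := by
    intro x y hx hy b hb
    rcases Finset.mem_union.1 (Finsupp.support_add hb) with h | h
    · exact hx b h
    · exact hy b h
  zero_mem' := by intro b hb; simp at hb
  smul_mem' := by
    intro c x hx b hb
    exact hx b (Finsupp.support_smul hb)

noncomputable def cyclesAt {ι : Type*} (d : (ι →₀ ℤ) →ₗ[ℤ] (ι →₀ ℤ)) (deg : ι → ℤ)
    (p : ℤ) : Submodule ℤ (ι →₀ ℤ) :=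
  LinearMap.ker d ⊓ partSub deg p

noncomputable abbrev homAt {ι : Type*} (d : (ι →₀ ℤ) →ₗ[ℤ] (ι →₀ ℤ)) (deg : ι → ℤ)
    (p : ℤ) : Type _ :=
  (cyclesAt d deg p) ⧸
    (Submodule.comap (cyclesAt d deg p).subtype (Submodule.map d (partSub deg (p + 1))))

section ConeLemmas

variable {n : ℕ}

lemma csg_mul_self (j : Fin n) (σ : Finset (Fin n)) : csg j σ * csg j σ = 1 := by
  unfold csg; rw [← pow_add]; exact Even.neg_one_pow ⟨_, rfl⟩

lemma csg_insert_not_lt (a j : Fin n) (σ : Finset (Fin n)) (h : ¬ a < j) :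
    csg j (insert a σ) = csg j σ := by
  unfold csg; rw [Finset.filter_insert, if_neg h]

lemma csg_insert_lt {a j : Fin n} {σ : Finset (Fin n)} (ha : a ∉ σ) (h : a < j) :
    csg j (insert a σ) = - csg j σ := by
  unfold csg
  rw [Finset.filter_insert, if_pos h,
    Finset.card_insert_of_notMem (fun hc => ha (Finset.mem_filter.1 hc).1), pow_succ]
  ring

lemma csg_erase_self (a : Fin n) (σ : Finset (Fin n)) : csg a (σ.erase a) = csg a σ := by
  have hf : Finset.filter (fun j => j < a) (σ.erase a) = Finset.filter (fun j => j < a) σ := by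
    rw [Finset.filter_erase]
    exact Finset.erase_eq_of_notMem (fun hc => lt_irrefl a (Finset.mem_filter.1 hc).2)
  unfold csg
  rw [hf]

lemma csg_cross {a j : Fin n} {σ : Finset (Fin n)} (ha : a ∉ σ) (hj : j ∈ σ) :
    csg a σ * csg j (insert a σ) + csg j σ * csg a (σ.erase j) = 0 := by
  have hja : j ≠ a := fun h => ha (h ▸ hj)
  have hσ : insert j (σ.erase j) = σ := Finset.insert_erase hj
  by_cases h : a < j
  · rw [csg_insert_lt ha h]
    have he : csg a (σ.erase j) = csg a σ := by
      conv_rhs => rw [← hσ]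
      rw [csg_insert_not_lt _ _ _ (lt_asymm h)]
    rw [he]; ring
  · have hlt : j < a := lt_of_le_of_ne (not_lt.1 h) hja
    rw [csg_insert_not_lt _ _ _ h]
    have he : csg a σ = - csg a (σ.erase j) := by
      conv_lhs => rw [← hσ]
      rw [csg_insert_lt (Finset.notMem_erase j σ) hlt]
    rw [he]; ring

lemma lift_single_one {ι M : Type*} [AddCommMonoid M] [Module ℤ M] (f : ι → M) (b : ι) :
    Finsupp.lift M ℤ ι f (Finsupp.single b 1) = f b := by
  rw [Finsupp.lift_apply, Finsupp.sum_single_index (zero_smul ℤ (f b)), one_smul]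

lemma Rbnd_single {F : Set (Finset (Fin n))}
    (hdown : ∀ {s t : Finset (Fin n)}, s ∈ F → t ⊆ s → t ∈ F) (b : RIdx F) :
    Rbnd F (Finsupp.single b 1) =
      ∑ j ∈ b.1, csg j b.1 •
        Finsupp.single (⟨b.1.erase j, hdown b.2 (Finset.erase_subset j b.1)⟩ : RIdx F) (1:ℤ) := by
  unfold Rbnd
  rw [lift_single_one]
  exact Finset.sum_congr rfl fun j hj => dif_pos _

open Classical in
noncomputable def coneH (F : Set (Finset (Fin n))) (a : Fin n)
    (hins : ∀ {s : Finset (Fin n)}, s ∈ F → insert a s ∈ F) :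
    (RIdx F →₀ ℤ) →ₗ[ℤ] (RIdx F →₀ ℤ) :=
  Finsupp.lift (RIdx F →₀ ℤ) ℤ (RIdx F) fun b =>
    if h : a ∈ b.1 then 0
    else csg a b.1 • Finsupp.single (⟨insert a b.1, hins b.2⟩ : RIdx F) 1

open Classical in
lemma coneH_single {F : Set (Finset (Fin n))} {a : Fin n}
    (hins : ∀ {s : Finset (Fin n)}, s ∈ F → insert a s ∈ F) (b : RIdx F) :
    coneH F a hins (Finsupp.single b 1) =
      if h : a ∈ b.1 then 0
      else csg a b.1 • Finsupp.single (⟨insert a b.1, hins b.2⟩ : RIdx F) 1 := by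
  unfold coneH
  rw [lift_single_one]
  rfl

lemma cone_homotopy_single {F : Set (Finset (Fin n))} {a : Fin n}
    (hdown : ∀ {s t : Finset (Fin n)}, s ∈ F → t ⊆ s → t ∈ F)
    (hins : ∀ {s : Finset (Fin n)}, s ∈ F → insert a s ∈ F) (b : RIdx F) :
    Rbnd F (coneH F a hins (Finsupp.single b 1)) +
      coneH F a hins (Rbnd F (Finsupp.single b 1)) = Finsupp.single b 1 := by
  classical
  rw [coneH_single hins, Rbnd_single hdown]
  erw [map_sum]
  by_cases ha : a ∈ b.1
  · erw [dif_pos ha, map_zero, zero_add]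
    have hsum : ∑ j ∈ b.1, coneH F a hins (csg j b.1 •
        Finsupp.single (⟨b.1.erase j, hdown b.2 (Finset.erase_subset j b.1)⟩ : RIdx F) (1:ℤ)) =
        coneH F a hins (csg a b.1 •
        Finsupp.single (⟨b.1.erase a, hdown b.2 (Finset.erase_subset a b.1)⟩ : RIdx F) (1:ℤ)) := by
      refine Finset.sum_eq_single_of_mem a ha fun j hj hja => ?_
      erw [map_smul, coneH_single hins, dif_pos (Finset.mem_erase.2 ⟨Ne.symm hja, ha⟩)]
      exact smul_zero (A := RIdx F →₀ ℤ) (csg j b.1)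
    erw [hsum, map_smul, coneH_single hins, dif_neg (Finset.notMem_erase a b.1),
      smul_smul, csg_erase_self, csg_mul_self, one_smul]
    congr 1
    exact Subtype.ext (Finset.insert_erase ha)
  · erw [dif_neg ha, map_smul, Rbnd_single hdown]
    rw [Finset.sum_insert ha]
    have h1 : csg a (insert a b.1) = csg a b.1 := csg_insert_not_lt _ _ _ (lt_irrefl a)
    have h2 : (⟨(insert a b.1).erase a,
        hdown (hins b.2) (Finset.erase_subset a (insert a b.1))⟩ : RIdx F) = b :=
      Subtype.ext (Finset.erase_insert ha)
    erw [h2, h1, smul_add, smul_smul, csg_mul_self, one_smul]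
    erw [add_assoc, add_eq_left]
    erw [Finset.smul_sum (M := ℤ) (N := RIdx F →₀ ℤ), ← Finset.sum_add_distrib]
    refine Finset.sum_eq_zero fun j hj => ?_
    have hja : j ≠ a := fun h => ha (h ▸ hj)
    erw [map_smul, coneH_single hins,
      dif_neg (fun hc => ha (Finset.mem_of_mem_erase hc))]
    have he : ((insert a b.1).erase j) = insert a (b.1.erase j) :=
      Finset.erase_insert_of_ne (Ne.symm hja)
    have h3 : (⟨(insert a b.1).erase j, hdown (hins b.2) (Finset.erase_subset j (insert a b.1))⟩ : RIdx F) =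
        ⟨insert a (b.1.erase j), hins (hdown b.2 (Finset.erase_subset j b.1))⟩ := Subtype.ext he
    erw [h3, smul_smul, smul_smul, ← add_smul]
    erw [csg_cross ha hj, zero_smul]

lemma cone_homotopy {F : Set (Finset (Fin n))} {a : Fin n}
    (hdown : ∀ {s t : Finset (Fin n)}, s ∈ F → t ⊆ s → t ∈ F)
    (hins : ∀ {s : Finset (Fin n)}, s ∈ F → insert a s ∈ F) (y : RIdx F →₀ ℤ) :
    Rbnd F (coneH F a hins y) + coneH F a hins (Rbnd F y) = y := by
  have key : ((Rbnd F).comp (coneH F a hins) + (coneH F a hins).comp (Rbnd F)) =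
      LinearMap.id := by
    apply Finsupp.lhom_ext
    intro b r
    have h1 := cone_homotopy_single hdown hins b
    have h2 : Finsupp.single b r = r • Finsupp.single b (1:ℤ) := by
      rw [Finsupp.smul_single, smul_eq_mul, mul_one]
    simp only [LinearMap.add_apply, LinearMap.comp_apply, LinearMap.id_apply, h2, map_smul]
    rw [h1]
  have := LinearMap.congr_fun key y
  simpa using this

open Classical in
theorem cone_subsingleton {F : Set (Finset (Fin n))} {a : Fin n}
    (hdown : ∀ {s t : Finset (Fin n)}, s ∈ F → t ⊆ s → t ∈ F)
    (hins : ∀ {s : Finset (Fin n)}, s ∈ F → insert a s ∈ F) (p : ℤ) :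
    Subsingleton (homAt (Rbnd F) Rdeg p) := by
  rw [Submodule.Quotient.subsingleton_iff, eq_top_iff]
  rintro ⟨x, hx⟩ -
  simp only [Submodule.mem_comap, Submodule.subtype_apply, Submodule.mem_map]
  refine ⟨coneH F a hins x, ?_, ?_⟩
  · intro b' hb'
    have hrepr : coneH F a hins x = x.sum fun b r => r •
        (if h : a ∈ b.1 then 0
         else csg a b.1 • Finsupp.single (⟨insert a b.1, hins b.2⟩ : RIdx F) (1:ℤ)) := by
      unfold coneH
      rw [Finsupp.lift_apply]
      rfl
    rw [hrepr] at hb'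
    obtain ⟨b, hbx, hb'2⟩ := Finset.mem_biUnion.1 (Finsupp.support_sum hb')
    have hb'3 := Finsupp.support_smul hb'2
    by_cases hab : a ∈ b.1
    · rw [dif_pos hab] at hb'3
      simp at hb'3
      exact absurd hb'3 (Finset.notMem_empty _)
    · rw [dif_neg hab] at hb'3
      have hb'4 : b' = ⟨insert a b.1, hins b.2⟩ :=
        Finset.mem_singleton.1 (Finsupp.support_single_subset (Finsupp.support_smul hb'3))
      have hdeg : Rdeg b = p := hx.2 b hbx
      rw [hb'4]
      unfold Rdeg at hdeg ⊢
      simp only [Finset.card_insert_of_notMem hab]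
      push_cast
      omega
  · have h := cone_homotopy hdown hins x
    have hker : Rbnd F x = 0 := hx.1
    rw [hker, map_zero, add_zero] at h
    exact h

end ConeLemmas

lemma chi_injective (i : Fin m) : Function.Injective (chi i) := by
  intro j k h
  have hv := congrArg Fin.val h
  unfold chi at hv
  split_ifs at hv with h1 h2 h2 <;>
    simp only [Fin.coe_castSucc, Fin.val_succ] at hv <;> exact Fin.ext (by omega)

lemma chi_self (i : Fin m) : chi i i = i.castSucc := by simp [chi]

lemma mem_chiF {i : Fin m} {σ : Finset (Fin m)} {x : Fin (m + 1)} :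
    x ∈ chiF i σ ↔ ∃ j ∈ σ, chi i j = x := Finset.mem_image

lemma succ_not_mem_chiF (i : Fin m) (σ : Finset (Fin m)) : i.succ ∉ chiF i σ := by
  intro h
  obtain ⟨j, hj, hc⟩ := mem_chiF.1 h
  have hv := congrArg Fin.val hc
  unfold chi at hv
  split_ifs at hv with h1 <;> simp only [Fin.coe_castSucc, Fin.val_succ] at hv <;> omega

theorem stmt11 (K : ASC m) (i : Fin m) (ω : Finset (Fin m)) (hiω : i ∈ ω)
    (hiK : {i} ∈ K.faces) :
    (fullSub (wedgeFaces K i) (chiF i ω) =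
      {s | ∃ (ε : Finset (Fin (m + 1))) (τ : Finset (Fin m)),
        ε ⊆ {i.castSucc} ∧ τ ∈ K.faces ∧ τ ⊆ ω.erase i ∧ s = ε ∪ chiF i τ}) ∧
    (∀ p : ℤ, Subsingleton
      (homAt (Rbnd (fullSub (wedgeFaces K i) (chiF i ω))) Rdeg p)) := by
  have heq : fullSub (wedgeFaces K i) (chiF i ω) =
      {s | ∃ (ε : Finset (Fin (m + 1))) (τ : Finset (Fin m)),
        ε ⊆ {i.castSucc} ∧ τ ∈ K.faces ∧ τ ⊆ ω.erase i ∧ s = ε ∪ chiF i τ} := by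
    ext s
    constructor
    · rintro ⟨⟨α, t, rfl, hcase⟩, hsub⟩
      have hKt : t ∈ K.faces ∧ i ∉ t := by
        rcases hcase with ⟨_, h⟩ | ⟨_, h⟩ | ⟨_, h1, h2, _⟩
        exacts [h, h, ⟨h1, h2⟩]
      have hα : α ⊆ {i.castSucc} := by
        intro x hx
        have hxs : x ∈ chiF i ω := hsub (Finset.mem_union_left _ hx)
        rcases hcase with ⟨h1, _⟩ | ⟨h1, _⟩ | ⟨h1, _⟩
        · exact h1 hx
        · exact absurd hxs (by
            rw [Finset.mem_singleton.1 (h1 hx)]; exact succ_not_mem_chiF i ω)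
        · rcases Finset.mem_insert.1 (h1 hx) with h | h
          · rw [h]; exact Finset.mem_singleton_self _
          · exact absurd hxs (by
              rw [Finset.mem_singleton.1 h]; exact succ_not_mem_chiF i ω)
      refine ⟨α, t, hα, hKt.1, ?_, rfl⟩
      intro j hj
      refine Finset.mem_erase.2 ⟨fun h => hKt.2 (h ▸ hj), ?_⟩
      have hmem : chi i j ∈ chiF i ω :=
        hsub (Finset.mem_union_right _ (Finset.mem_image_of_mem _ hj))
      obtain ⟨k, hk, hkj⟩ := mem_chiF.1 hmem
      rwa [← chi_injective i hkj]
    · rintro ⟨ε, τ, hε, hτK, hτω, rfl⟩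
      have hiτ : i ∉ τ := fun h => (Finset.mem_erase.1 (hτω h)).1 rfl
      refine ⟨⟨ε, τ, rfl, Or.inl ⟨hε, hτK, hiτ⟩⟩, ?_⟩
      apply Finset.union_subset
      · intro x hx
        rw [Finset.mem_singleton.1 (hε hx), ← chi_self i]
        exact Finset.mem_image_of_mem _ hiω
      · exact Finset.image_subset_image (fun j hj => (Finset.mem_erase.1 (hτω hj)).2)
  refine ⟨heq, fun p => ?_⟩
  classical
  have hdown : ∀ {s t : Finset (Fin (m + 1))}, s ∈ fullSub (wedgeFaces K i) (chiF i ω) →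
      t ⊆ s → t ∈ fullSub (wedgeFaces K i) (chiF i ω) := by
    intro s t hs hts
    rw [heq] at hs ⊢
    obtain ⟨ε, τ, hε, hτK, hτω, rfl⟩ := hs
    refine ⟨t ∩ {i.castSucc}, τ.filter (fun j => chi i j ∈ t),
      Finset.inter_subset_right, K.down_closed hτK (Finset.filter_subset _ _),
      subset_trans (Finset.filter_subset _ _) hτω, ?_⟩
    ext x
    constructor
    · intro hx
      rcases Finset.mem_union.1 (hts hx) with h | h
      · exact Finset.mem_union_left _ (Finset.mem_inter.2 ⟨hx, hε h⟩)
      · obtain ⟨j, hj, rfl⟩ := mem_chiF.1 h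
        exact Finset.mem_union_right _
          (Finset.mem_image_of_mem _ (Finset.mem_filter.2 ⟨hj, hx⟩))
    · intro hx
      rcases Finset.mem_union.1 hx with h | h
      · exact (Finset.mem_inter.1 h).1
      · obtain ⟨j, hj, rfl⟩ := mem_chiF.1 h
        exact (Finset.mem_filter.1 hj).2
  have hins : ∀ {s : Finset (Fin (m + 1))}, s ∈ fullSub (wedgeFaces K i) (chiF i ω) →
      insert i.castSucc s ∈ fullSub (wedgeFaces K i) (chiF i ω) := by
    intro s hs
    rw [heq] at hs ⊢
    obtain ⟨ε, τ, hε, hτK, hτω, rfl⟩ := hs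
    exact ⟨insert i.castSucc ε, τ, Finset.insert_subset (Finset.mem_singleton_self _) hε,
      hτK, hτω, by rw [Finset.insert_union]⟩
  exact cone_subsingleton hdown hins p
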